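/- Let P and Q be projective measurements on a finite-dimensional complex Hilbert space, and let ρ = Σ_{i=1}^r π_i |ψ_i⟩⟨ψ_i| be a mixed state (π_i > 0, Σ π_i = 1, ψ_i unit vectors). Then H(P,ρ) + H(Q,ρ) ≥ -2 log₂ max_{i,j} ‖P_i Q_j‖, where H(X,ρ) = -Σ_k Tr(ρ X_k) log₂ Tr(ρ X_k). -/

import Mathlib

set_option maxHeartbeats 1000000
set_option linter.unusedSectionVars false

open Complex Real Topology Filter

section EntropicUncertaintyHelpers
variable {H : Type*} [NormedAddCommGroup H] [InnerProductSpace ℂ H] [CompleteSpace H]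

local notation "⟪" x ", " y "⟫" => @inner ℂ _ _ x y



lemma proj_inner_self {T : H →L[ℂ] H} (hsa : IsSelfAdjoint T) (hidem : T ∘L T = T) (x : H) :
    ⟪x, T x⟫ = ((‖T x‖^2 : ℝ) : ℂ) := by
  have hadj : ContinuousLinearMap.adjoint T = T :=
    (ContinuousLinearMap.isSelfAdjoint_iff'.mp hsa)
  have h1 : T x = T (T x) := by
    conv_lhs => rw [← hidem]
    rfl
  have h3 := ContinuousLinearMap.adjoint_inner_right T x (T x)
  rw [hadj] at h3
  have h2 : ⟪x, T x⟫ = ⟪T x, T x⟫ := by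
    conv_lhs => rw [h1]
    exact h3
  rw [h2, inner_self_eq_norm_sq_to_K]
  norm_cast

lemma sum_sq_proj {N : ℕ} (R : Fin N → H →L[ℂ] H)
    (hsa : ∀ i, IsSelfAdjoint (R i)) (hidem : ∀ i, R i ∘L R i = R i)
    (hsum : ∑ i, R i = 1) (x : H) :
    ∑ k, ‖R k x‖^2 = ‖x‖^2 := by
  have h : ((∑ k, ‖R k x‖^2 : ℝ) : ℂ) = ((‖x‖^2 : ℝ) : ℂ) := by
    calc ((∑ k, ‖R k x‖^2 : ℝ) : ℂ) = ∑ k, ((‖R k x‖^2 : ℝ) : ℂ) := by push_cast; ring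
      _ = ∑ k, ⟪x, R k x⟫ := by
          refine Finset.sum_congr rfl fun k _ => ?_
          rw [proj_inner_self (hsa k) (hidem k)]
      _ = ⟪x, (∑ k, R k) x⟫ := by
          rw [ContinuousLinearMap.sum_apply, inner_sum]
      _ = ⟪x, x⟫ := by rw [hsum]; rfl
      _ = ((‖x‖^2 : ℝ) : ℂ) := by rw [inner_self_eq_norm_sq_to_K]; norm_cast
  exact_mod_cast h

lemma proj_orth {N : ℕ} (R : Fin N → H →L[ℂ] H)
    (hsa : ∀ i, IsSelfAdjoint (R i)) (hidem : ∀ i, R i ∘L R i = R i)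
    (hsum : ∑ i, R i = 1) {k j : Fin N} (hkj : k ≠ j) (x : H) :
    R k (R j x) = 0 := by
  have hsq := sum_sq_proj R hsa hidem hsum (R j x)
  have hjj : ‖R j (R j x)‖^2 = ‖R j x‖^2 := by
    have : R j (R j x) = R j x := by
      conv_rhs => rw [← hidem j]
      rfl
    rw [this]
  have h2 : ∑ i ∈ Finset.univ.erase j, ‖R i (R j x)‖^2 + ‖R j (R j x)‖^2 =
      ∑ i, ‖R i (R j x)‖^2 := Finset.sum_erase_add _ _ (Finset.mem_univ j)
  have hz : ∑ i ∈ Finset.univ.erase j, ‖R i (R j x)‖^2 = 0 := by linarith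
  have := (Finset.sum_eq_zero_iff_of_nonneg (fun i _ => sq_nonneg ‖R i (R j x)‖)).mp hz k
    (Finset.mem_erase.mpr ⟨hkj, Finset.mem_univ k⟩)
  simpa using this

lemma proj_inner_orth {N : ℕ} (R : Fin N → H →L[ℂ] H)
    (hsa : ∀ i, IsSelfAdjoint (R i)) (hidem : ∀ i, R i ∘L R i = R i)
    (hsum : ∑ i, R i = 1) {k j : Fin N} (hkj : k ≠ j) (x y : H) :
    ⟪R k x, R j y⟫ = 0 := by
  have hadj : ContinuousLinearMap.adjoint (R k) = R k :=
    (ContinuousLinearMap.isSelfAdjoint_iff'.mp (hsa k))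
  nth_rewrite 1 [← hadj]
  rw [ContinuousLinearMap.adjoint_inner_left, proj_orth R hsa hidem hsum hkj y,
    inner_zero_right]

lemma norm_sq_sum_of_orth {ι : Type*} (t : Finset ι) (v : ι → H)
    (horth : ∀ i ∈ t, ∀ j ∈ t, i ≠ j → ⟪v i, v j⟫ = 0) :
    ‖∑ i ∈ t, v i‖^2 = ∑ i ∈ t, ‖v i‖^2 := by
  have h : ⟪∑ i ∈ t, v i, ∑ i ∈ t, v i⟫ = ((∑ i ∈ t, ‖v i‖^2 : ℝ) : ℂ) := by
    rw [sum_inner]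
    calc ∑ i ∈ t, ⟪v i, ∑ j ∈ t, v j⟫ = ∑ i ∈ t, ((‖v i‖^2 : ℝ) : ℂ) := by
          refine Finset.sum_congr rfl fun i hi => ?_
          rw [inner_sum, Finset.sum_eq_single i (fun j hj hji => horth i hi j hj (Ne.symm hji))
            (fun h => absurd hi h), inner_self_eq_norm_sq_to_K]
          norm_cast
      _ = ((∑ i ∈ t, ‖v i‖^2 : ℝ) : ℂ) := by push_cast; ring
  have h2 : ((‖∑ i ∈ t, v i‖^2 : ℝ) : ℂ) = ((∑ i ∈ t, ‖v i‖^2 : ℝ) : ℂ) := by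
    rw [← h, inner_self_eq_norm_sq_to_K]
    norm_cast
  exact_mod_cast h2



lemma hadamard_core {m n : ℕ} (P : Fin m → H →L[ℂ] H) (Q : Fin n → H →L[ℂ] H)
    (hPsa : ∀ i, IsSelfAdjoint (P i)) (hPidem : ∀ i, P i ∘L P i = P i)
    (hQsa : ∀ j, IsSelfAdjoint (Q j)) (hQidem : ∀ j, Q j ∘L Q j = Q j)
    (hPsum : ∑ i, P i = 1) (hQsum : ∑ j, Q j = 1)
    (ψ : H) (hψ : ‖ψ‖ = 1) (c : ℝ) (hc : 0 < c)
    (hcle : ∀ k l (x : H), ‖Q l (P k x)‖ ≤ c * ‖x‖)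
    {s : ℝ} (hs0 : 0 < s) (hs1 : s ≤ 1/2) :
    (∑ l ∈ Finset.univ.filter (fun l => ‖Q l ψ‖^2 ≠ 0), (‖Q l ψ‖^2) ^ (1/(1-s))) ^ ((1-s)/2)
      ≤ c ^ s *
    (∑ k ∈ Finset.univ.filter (fun k => ‖P k ψ‖^2 ≠ 0), (‖P k ψ‖^2) ^ (1/(1+s))) ^ ((1+s)/2) := by
  set p : Fin m → ℝ := fun k => ‖P k ψ‖^2 with hp_def
  set q : Fin n → ℝ := fun l => ‖Q l ψ‖^2 with hq_def
  set Sp := Finset.univ.filter (fun k => p k ≠ 0) with hSp_def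
  set Sq := Finset.univ.filter (fun l => q l ≠ 0) with hSq_def
  set α : ℝ := 1/(1+s) with hα_def
  set β : ℝ := 1/(1-s) with hβ_def
  have hs1' : s < 1 := lt_of_le_of_lt hs1 (by norm_num)
  have h1s : (0:ℝ) < 1 - s := by linarith
  have h1s' : (0:ℝ) < 1 + s := by linarith
  have hβ1 : 1 < β := by rw [hβ_def]; rw [lt_div_iff₀ h1s]; linarith
  have hα0 : 0 < α := by positivity
  have hα1 : α < 1 := by rw [hα_def, div_lt_one h1s']; linarith
  have hp_pos : ∀ k ∈ Sp, 0 < p k := fun k hk => by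
    have := (Finset.mem_filter.mp hk).2
    have : 0 ≤ p k := sq_nonneg _
    rcases lt_or_eq_of_le this with h | h
    · exact h
    · exact absurd h.symm (Finset.mem_filter.mp hk).2
  have hq_pos : ∀ l ∈ Sq, 0 < q l := fun l hl => by
    have h2 := (Finset.mem_filter.mp hl).2
    rcases lt_or_eq_of_le (sq_nonneg ‖Q l ψ‖) with h | h
    · exact h
    · exact absurd h.symm h2
  have hpsum : ∑ k, p k = 1 := by
    rw [hp_def, sum_sq_proj P hPsa hPidem hPsum ψ, hψ]; norm_num
  have hqsum : ∑ l, q l = 1 := by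
    rw [hq_def, sum_sq_proj Q hQsa hQidem hQsum ψ, hψ]; norm_num
  have hp_le1 : ∀ k, p k ≤ 1 := fun k => by
    rw [← hpsum]
    exact Finset.single_le_sum (fun i _ => sq_nonneg ‖P i ψ‖) (Finset.mem_univ k)
  have hq_le1 : ∀ l, q l ≤ 1 := fun l => by
    rw [← hqsum]
    exact Finset.single_le_sum (fun i _ => sq_nonneg ‖Q i ψ‖) (Finset.mem_univ l)
  set Qb : ℝ := ∑ l ∈ Sq, (q l) ^ β with hQb_def
  set Pb : ℝ := ∑ k ∈ Sp, (p k) ^ α with hPb_def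
  have hSq_ne : Sq.Nonempty := by
    by_contra hne
    rw [Finset.not_nonempty_iff_eq_empty] at hne
    have : ∑ l, q l = 0 := by
      refine Finset.sum_eq_zero fun l _ => ?_
      by_contra hql
      have : l ∈ Sq := Finset.mem_filter.mpr ⟨Finset.mem_univ l, hql⟩
      rw [hne] at this
      exact absurd this (Finset.notMem_empty l)
    rw [hqsum] at this; norm_num at this
  have hSp_ne : Sp.Nonempty := by
    by_contra hne
    rw [Finset.not_nonempty_iff_eq_empty] at hne
    have : ∑ k, p k = 0 := by
      refine Finset.sum_eq_zero fun k _ => ?_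
      by_contra hpk
      have : k ∈ Sp := Finset.mem_filter.mpr ⟨Finset.mem_univ k, hpk⟩
      rw [hne] at this
      exact absurd this (Finset.notMem_empty k)
    rw [hpsum] at this; norm_num at this
  have hQb_pos : 0 < Qb := by
    obtain ⟨l, hl⟩ := hSq_ne
    refine Finset.sum_pos' (fun i hi => Real.rpow_nonneg (sq_nonneg _) _) ⟨l, hl, ?_⟩
    exact Real.rpow_pos_of_pos (hq_pos l hl) _
  have hPb_pos : 0 < Pb := by
    obtain ⟨k, hk⟩ := hSp_ne
    refine Finset.sum_pos' (fun i hi => Real.rpow_nonneg (sq_nonneg _) _) ⟨k, hk, ?_⟩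
    exact Real.rpow_pos_of_pos (hp_pos k hk) _
  -- the three-lines function
  set gq : ℂ → ℂ := fun z => (((β-1)/2 : ℝ) : ℂ) + ((β/2 : ℝ) : ℂ) * z with hgq_def
  set ep : ℂ → ℂ := fun z => (((α-1)/2 : ℝ) : ℂ) + ((α/2 : ℝ) : ℂ) * z with hep_def
  set G : ℂ → ℂ := fun z => ∑ l ∈ Sq, ∑ k ∈ Sp,
    (q l : ℂ) ^ (gq z) * ((p k : ℂ) ^ (ep z) * ⟪Q l ψ, Q l (P k ψ)⟫) with hG_def
  -- contraction properties
  have hPcontr : ∀ (x : H) k, ‖P k x‖ ≤ ‖x‖ := by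
    intro x k
    have h1 : ‖P k x‖^2 ≤ ‖x‖^2 := by
      rw [← sum_sq_proj P hPsa hPidem hPsum x]
      exact Finset.single_le_sum (fun i _ => sq_nonneg ‖P i x‖) (Finset.mem_univ k)
    nlinarith [norm_nonneg (P k x), norm_nonneg x]
  have hQcontr : ∀ (x : H) l, ‖Q l x‖ ≤ ‖x‖ := by
    intro x l
    have h1 : ‖Q l x‖^2 ≤ ‖x‖^2 := by
      rw [← sum_sq_proj Q hQsa hQidem hQsum x]
      exact Finset.single_le_sum (fun i _ => sq_nonneg ‖Q i x‖) (Finset.mem_univ l)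
    nlinarith [norm_nonneg (Q l x), norm_nonneg x]
  -- real parts of the exponents
  have hgq_re : ∀ z : ℂ, (gq z).re = (β-1)/2 + (β/2) * z.re := by
    intro z
    simp [hgq_def, Complex.add_re, Complex.mul_re]
  have hep_re : ∀ z : ℂ, (ep z).re = (α-1)/2 + (α/2) * z.re := by
    intro z
    simp [hep_def, Complex.add_re, Complex.mul_re]
  -- generic norm bound
  have hGbound : ∀ z : ℂ, ‖G z‖ ≤ ∑ l ∈ Sq, ∑ k ∈ Sp,
      q l ^ ((gq z).re) * (p k ^ ((ep z).re) * ‖⟪Q l ψ, Q l (P k ψ)⟫‖) := by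
    intro z
    refine (norm_sum_le _ _).trans (Finset.sum_le_sum fun l hl => ?_)
    refine (norm_sum_le _ _).trans (Finset.sum_le_sum fun k hk => ?_)
    rw [norm_mul, norm_mul,
      Complex.norm_cpow_eq_rpow_re_of_pos (hq_pos l hl),
      Complex.norm_cpow_eq_rpow_re_of_pos (hp_pos k hk)]
  -- differentiability
  have hGdiff : Differentiable ℂ G := by
    rw [hG_def]
    refine Differentiable.fun_sum fun l hl => Differentiable.fun_sum fun k hk => ?_
    have hgqd : Differentiable ℂ gq := by
      rw [hgq_def]
      exact (differentiable_id.const_mul _).const_add _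
    have hepd : Differentiable ℂ ep := by
      rw [hep_def]
      exact (differentiable_id.const_mul _).const_add _
    refine Differentiable.mul ?_ (Differentiable.mul ?_ (differentiable_const _))
    · exact hgqd.const_cpow (Or.inl (by exact_mod_cast (hq_pos l hl).ne'))
    · exact hepd.const_cpow (Or.inl (by exact_mod_cast (hp_pos k hk).ne'))
  have hd : DiffContOnCl ℂ G (Complex.HadamardThreeLines.verticalStrip 0 1) :=
    hGdiff.diffContOnCl
  -- boundedness on the closed strip
  have hB : BddAbove ((norm ∘ G) '' (Complex.HadamardThreeLines.verticalClosedStrip 0 1)) := by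
    refine ⟨∑ l ∈ Sq, ∑ k ∈ Sp, q l ^ ((β-1)/2) * (p k ^ ((α-1)/2) * 1), ?_⟩
    rintro x ⟨z, hz, rfl⟩
    simp only [Function.comp_apply]
    refine (hGbound z).trans (Finset.sum_le_sum fun l hl => Finset.sum_le_sum fun k hk => ?_)
    have hzre : 0 ≤ z.re ∧ z.re ≤ 1 := ⟨hz.1, hz.2⟩
    have h1 : q l ^ ((gq z).re) ≤ q l ^ ((β-1)/2) := by
      rw [hgq_re]
      refine Real.rpow_le_rpow_of_exponent_ge (hq_pos l hl) (hq_le1 l) ?_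
      nlinarith [hzre.1, hβ1]
    have h2 : p k ^ ((ep z).re) ≤ p k ^ ((α-1)/2) := by
      rw [hep_re]
      refine Real.rpow_le_rpow_of_exponent_ge (hp_pos k hk) (hp_le1 k) ?_
      nlinarith [hzre.1, hα0]
    have h3 : ‖⟪Q l ψ, Q l (P k ψ)⟫‖ ≤ 1 := by
      refine (norm_inner_le_norm _ _).trans ?_
      have := hQcontr ψ l
      have := hQcontr (P k ψ) l
      have := hPcontr ψ k
      nlinarith [norm_nonneg (Q l ψ), norm_nonneg (Q l (P k ψ)), norm_nonneg (P k ψ)]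
    have hq0 : (0:ℝ) ≤ q l ^ ((gq z).re) := Real.rpow_nonneg (sq_nonneg _) _
    have hp0 : (0:ℝ) ≤ p k ^ ((ep z).re) := Real.rpow_nonneg (sq_nonneg _) _
    have hi0 : (0:ℝ) ≤ ‖⟪Q l ψ, Q l (P k ψ)⟫‖ := norm_nonneg _
    have hq0' : (0:ℝ) ≤ q l ^ ((β-1)/2) := Real.rpow_nonneg (sq_nonneg _) _
    have hp0' : (0:ℝ) ≤ p k ^ ((α-1)/2) := Real.rpow_nonneg (sq_nonneg _) _
    exact mul_le_mul h1 (mul_le_mul h2 h3 hi0 hp0') (mul_nonneg hp0 hi0) hq0'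
  -- the auxiliary vector u
  set u : ℂ → H := fun z => ∑ k ∈ Sp, ((p k : ℂ) ^ (ep z)) • (P k ψ) with hu_def
  have hGu : ∀ z, G z = ∑ l ∈ Sq, (q l:ℂ)^(gq z) * ⟪Q l ψ, Q l (u z)⟫ := by
    intro z
    refine Finset.sum_congr rfl fun l hl => ?_
    rw [hu_def]
    simp only [map_sum, map_smul, inner_sum, inner_smul_right, Finset.mul_sum]
  have hu_norm : ∀ z : ℂ, ‖u z‖^2 = ∑ k ∈ Sp, (p k ^ ((ep z).re))^2 * p k := by
    intro z
    rw [hu_def, norm_sq_sum_of_orth]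
    · refine Finset.sum_congr rfl fun k hk => ?_
      rw [norm_smul, mul_pow,
        Complex.norm_cpow_eq_rpow_re_of_pos (hp_pos k hk)]
    · intro i hi j hj hij
      rw [inner_smul_left, inner_smul_right,
        proj_inner_orth P hPsa hPidem hPsum hij ψ ψ]
      ring
  -- boundary bound at re = 0
  have hb0 : ∀ z : ℂ, z.re = 0 → ‖G z‖ ≤ Real.sqrt Qb * Real.sqrt Pb := by
    intro z hz
    have huPb : ‖u z‖^2 = Pb := by
      rw [hu_norm z, hPb_def]
      refine Finset.sum_congr rfl fun k hk => ?_
      rw [hep_re, hz]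
      have hpk := hp_pos k hk
      rw [← Real.rpow_natCast (p k ^ ((α-1)/2 + α/2*0)) 2, ← Real.rpow_mul hpk.le]
      nth_rewrite 2 [show p k = p k ^ (1:ℝ) by rw [Real.rpow_one]]
      rw [← Real.rpow_add hpk]
      norm_num
    have step1 : ‖G z‖ ≤ ∑ l ∈ Sq, Real.sqrt (q l ^ β) * ‖Q l (u z)‖ := by
      rw [hGu z]
      refine (norm_sum_le _ _).trans (Finset.sum_le_sum fun l hl => ?_)
      rw [norm_mul, Complex.norm_cpow_eq_rpow_re_of_pos (hq_pos l hl)]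
      have hql := hq_pos l hl
      have h1 : ‖⟪Q l ψ, Q l (u z)⟫‖ ≤ ‖Q l ψ‖ * ‖Q l (u z)‖ := norm_inner_le_norm _ _
      have h2 : q l ^ ((gq z).re) * ‖Q l ψ‖ = Real.sqrt (q l ^ β) := by
        rw [hgq_re, hz]
        have h3 : ‖Q l ψ‖ = Real.sqrt (q l) := by
          rw [hq_def]; rw [Real.sqrt_sq (norm_nonneg _)]
        rw [h3, Real.sqrt_eq_rpow, Real.sqrt_eq_rpow, ← Real.rpow_mul hql.le,
          ← Real.rpow_add hql]
        congr 1
        ring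
      calc q l ^ ((gq z).re) * ‖⟪Q l ψ, Q l (u z)⟫‖
          ≤ q l ^ ((gq z).re) * (‖Q l ψ‖ * ‖Q l (u z)‖) := by
            exact mul_le_mul_of_nonneg_left h1 (Real.rpow_nonneg (sq_nonneg _) _)
        _ = Real.sqrt (q l ^ β) * ‖Q l (u z)‖ := by rw [← mul_assoc, h2]
    have step2 : ∑ l ∈ Sq, Real.sqrt (q l ^ β) * ‖Q l (u z)‖ ≤
        Real.sqrt (∑ l ∈ Sq, q l ^ β) * Real.sqrt (∑ l ∈ Sq, ‖Q l (u z)‖^2) := by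
      have h := Real.sum_mul_le_sqrt_mul_sqrt Sq (fun l => Real.sqrt (q l ^ β))
        (fun l => ‖Q l (u z)‖)
      have e : ∑ l ∈ Sq, Real.sqrt (q l ^ β)^2 = ∑ l ∈ Sq, q l ^ β :=
        Finset.sum_congr rfl fun l hl => Real.sq_sqrt (Real.rpow_nonneg (sq_nonneg _) _)
      rw [e] at h
      exact h
    have step3 : ∑ l ∈ Sq, ‖Q l (u z)‖^2 ≤ Pb := by
      rw [← huPb, ← sum_sq_proj Q hQsa hQidem hQsum (u z)]
      exact Finset.sum_le_sum_of_subset_of_nonneg (Finset.filter_subset _ _)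
        (fun i _ _ => sq_nonneg _)
    calc ‖G z‖ ≤ Real.sqrt (∑ l ∈ Sq, q l ^ β) * Real.sqrt (∑ l ∈ Sq, ‖Q l (u z)‖^2) :=
          step1.trans step2
      _ ≤ Real.sqrt Qb * Real.sqrt Pb := by
          refine mul_le_mul_of_nonneg_left ?_ (Real.sqrt_nonneg _)
          exact Real.sqrt_le_sqrt step3
  -- boundary bound at re = 1
  have hb1 : ∀ z : ℂ, z.re = 1 → ‖G z‖ ≤ c * (Qb * Pb) := by
    intro z hz
    refine (hGbound z).trans ?_
    have hterm : ∀ l ∈ Sq, ∀ k ∈ Sp,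
        q l ^ ((gq z).re) * (p k ^ ((ep z).re) * ‖⟪Q l ψ, Q l (P k ψ)⟫‖) ≤
        c * (q l ^ β * p k ^ α) := by
      intro l hl k hk
      have hql := hq_pos l hl
      have hpk := hp_pos k hk
      have h1 : ‖⟪Q l ψ, Q l (P k ψ)⟫‖ ≤ Real.sqrt (q l) * (c * Real.sqrt (p k)) := by
        refine (norm_inner_le_norm _ _).trans ?_
        have h2 : ‖Q l ψ‖ = Real.sqrt (q l) := by rw [hq_def, Real.sqrt_sq (norm_nonneg _)]
        have h3 : ‖Q l (P k ψ)‖ ≤ c * Real.sqrt (p k) := by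
          have h4 : P k (P k ψ) = P k ψ := by
            conv_rhs => rw [← hPidem k]
            rfl
          have h5 := hcle k l (P k ψ)
          rw [h4] at h5
          rw [hp_def, Real.sqrt_sq (norm_nonneg _)]
          exact h5
        rw [h2]
        exact mul_le_mul_of_nonneg_left h3 (Real.sqrt_nonneg _)
      have hgq1 : (gq z).re = β - 1/2 := by rw [hgq_re, hz]; ring
      have hep1 : (ep z).re = α - 1/2 := by rw [hep_re, hz]; ring
      rw [hgq1, hep1]
      have e1 : q l ^ (β - 1/2) * Real.sqrt (q l) = q l ^ β := by
        rw [Real.sqrt_eq_rpow, ← Real.rpow_add hql]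
        norm_num
      have e2 : p k ^ (α - 1/2) * Real.sqrt (p k) = p k ^ α := by
        rw [Real.sqrt_eq_rpow, ← Real.rpow_add hpk]
        norm_num
      calc q l ^ (β - 1/2) * (p k ^ (α - 1/2) * ‖⟪Q l ψ, Q l (P k ψ)⟫‖)
          ≤ q l ^ (β - 1/2) * (p k ^ (α - 1/2) * (Real.sqrt (q l) * (c * Real.sqrt (p k)))) := by
            refine mul_le_mul_of_nonneg_left (mul_le_mul_of_nonneg_left h1 ?_) ?_
            · exact Real.rpow_nonneg (sq_nonneg _) _
            · exact Real.rpow_nonneg (sq_nonneg _) _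
        _ = c * ((q l ^ (β - 1/2) * Real.sqrt (q l)) * (p k ^ (α - 1/2) * Real.sqrt (p k))) := by
            ring
        _ = c * (q l ^ β * p k ^ α) := by rw [e1, e2]
    calc ∑ l ∈ Sq, ∑ k ∈ Sp, q l ^ ((gq z).re) * (p k ^ ((ep z).re) * ‖⟪Q l ψ, Q l (P k ψ)⟫‖)
        ≤ ∑ l ∈ Sq, ∑ k ∈ Sp, c * (q l ^ β * p k ^ α) :=
          Finset.sum_le_sum fun l hl => Finset.sum_le_sum fun k hk => hterm l hl k hk
      _ = ∑ l ∈ Sq, c * q l ^ β * ∑ k ∈ Sp, p k ^ α := by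
          refine Finset.sum_congr rfl fun l hl => ?_
          rw [Finset.mul_sum]
          exact Finset.sum_congr rfl fun k hk => by ring
      _ = c * (Qb * Pb) := by
          rw [← Finset.sum_mul, ← Finset.mul_sum, hQb_def, hPb_def]
          ring
  -- value at z = s
  have hψsum : ∑ k ∈ Sp, P k ψ = ψ := by
    have h1 : ∑ k, P k ψ = ψ := by
      rw [← ContinuousLinearMap.sum_apply, hPsum]
      rfl
    have h2 : ∑ k ∈ Sp, P k ψ = ∑ k, P k ψ := by
      refine Finset.sum_subset (Finset.filter_subset _ _) (fun k _ hk => ?_)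
      have h3 : p k = 0 := by
        by_contra hne
        exact hk (Finset.mem_filter.mpr ⟨Finset.mem_univ k, hne⟩)
      rw [hp_def] at h3
      simpa [pow_eq_zero_iff, norm_eq_zero] using h3
    rw [h2, h1]
  have hGs : G (s:ℂ) = ((Qb:ℝ):ℂ) := by
    have hgqs : gq (s:ℂ) = ((β - 1 : ℝ):ℂ) := by
      have h : (β-1)/2 + (β/2)*s = β - 1 := by
        rw [hβ_def]
        field_simp
        ring
      simp only [hgq_def]
      push_cast
      have h' := congrArg (fun t : ℝ => (t:ℂ)) h
      simp only [Complex.ofReal_add, Complex.ofReal_mul, Complex.ofReal_div, Complex.ofReal_sub,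
        Complex.ofReal_one, Complex.ofReal_ofNat] at h' ⊢
      linear_combination h'
    have heps : ep (s:ℂ) = 0 := by
      have h : (α-1)/2 + (α/2)*s = 0 := by
        rw [hα_def]
        field_simp
        ring
      simp only [hep_def]
      push_cast
      have h' := congrArg (fun t : ℝ => (t:ℂ)) h
      simp only [Complex.ofReal_add, Complex.ofReal_mul, Complex.ofReal_div, Complex.ofReal_sub,
        Complex.ofReal_one, Complex.ofReal_ofNat, Complex.ofReal_zero] at h' ⊢
      linear_combination h'
    rw [hG_def]
    simp only [hgqs, heps, Complex.cpow_zero, one_mul]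
    have hinner : ∀ l ∈ Sq, ∑ k ∈ Sp, ⟪Q l ψ, Q l (P k ψ)⟫ = ((q l : ℝ) : ℂ) := by
      intro l hl
      rw [← inner_sum, ← map_sum, hψsum]
      have := proj_inner_self (hQsa l) (hQidem l) ψ
      have h2 : ⟪Q l ψ, Q l ψ⟫ = ((‖Q l ψ‖^2 : ℝ):ℂ) := by
        rw [inner_self_eq_norm_sq_to_K]
        norm_cast
      rw [h2, hq_def]
    calc ∑ l ∈ Sq, ∑ k ∈ Sp, (q l:ℂ) ^ ((β - 1:ℝ):ℂ) * ⟪Q l ψ, Q l (P k ψ)⟫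
        = ∑ l ∈ Sq, (q l:ℂ) ^ ((β - 1:ℝ):ℂ) * ((q l : ℝ):ℂ) := by
          refine Finset.sum_congr rfl fun l hl => ?_
          rw [← Finset.mul_sum, hinner l hl]
      _ = ∑ l ∈ Sq, ((q l ^ β : ℝ) : ℂ) := by
          refine Finset.sum_congr rfl fun l hl => ?_
          rw [← Complex.ofReal_cpow (sq_nonneg _), ← Complex.ofReal_mul]
          congr 1
          rw [← Real.rpow_add_one (ne_of_gt (hq_pos l hl)) (β-1)]
          norm_num
      _ = ((Qb:ℝ):ℂ) := by rw [hQb_def]; push_cast; ring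

  -- apply Hadamard three lines
  have hzmem : (s:ℂ) ∈ Complex.HadamardThreeLines.verticalClosedStrip 0 1 := by
    simp only [Complex.HadamardThreeLines.verticalClosedStrip, Set.mem_preimage,
      Complex.ofReal_re, Set.mem_Icc]
    exact ⟨hs0.le, by linarith⟩
  have h3l := Complex.HadamardThreeLines.norm_le_interp_of_mem_verticalClosedStrip' (f := G) zero_lt_one hzmem hd hB
    (fun z hz => hb0 z (by simpa using hz)) (fun z hz => hb1 z (by simpa using hz))
  have hGsnorm : ‖G (s:ℂ)‖ = Qb := by
    rw [hGs, Complex.norm_real, Real.norm_eq_abs, abs_of_pos hQb_pos]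
  rw [hGsnorm, Complex.ofReal_re] at h3l
  simp only [sub_zero, div_one] at h3l
  have e1 : ∀ x : ℝ, 0 < x → (Real.sqrt x)^(1-s) * x^s = x^((1+s)/2) := by
    intro x hx
    rw [Real.sqrt_eq_rpow, ← Real.rpow_mul hx.le, ← Real.rpow_add hx]
    congr 1
    ring
  have hrhs : (Real.sqrt Qb * Real.sqrt Pb)^(1-s) * (c*(Qb*Pb))^s
      = (c^s * Pb^((1+s)/2)) * Qb^((1+s)/2) := by
    rw [Real.mul_rpow (Real.sqrt_nonneg _) (Real.sqrt_nonneg _),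
        Real.mul_rpow hc.le (by positivity : (0:ℝ) ≤ Qb*Pb),
        Real.mul_rpow hQb_pos.le hPb_pos.le]
    calc (Real.sqrt Qb)^(1-s) * (Real.sqrt Pb)^(1-s) * (c^s * (Qb^s * Pb^s))
        = ((Real.sqrt Qb)^(1-s) * Qb^s) * (((Real.sqrt Pb)^(1-s) * Pb^s) * c^s) := by ring
      _ = Qb^((1+s)/2) * (Pb^((1+s)/2) * c^s) := by rw [e1 Qb hQb_pos, e1 Pb hPb_pos]
      _ = (c^s * Pb^((1+s)/2)) * Qb^((1+s)/2) := by ring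
  rw [hrhs] at h3l
  have final : Qb^((1-s)/2) * Qb^((1+s)/2) ≤ (c^s * Pb^((1+s)/2)) * Qb^((1+s)/2) := by
    have he : (1-s)/2 + (1+s)/2 = 1 := by ring
    rw [← Real.rpow_add hQb_pos, he, Real.rpow_one]
    exact h3l
  exact (mul_le_mul_iff_of_pos_right (Real.rpow_pos_of_pos hQb_pos _)).mp final


lemma pure_MU {m n : ℕ} (P : Fin m → H →L[ℂ] H) (Q : Fin n → H →L[ℂ] H)
    (hPsa : ∀ i, IsSelfAdjoint (P i)) (hPidem : ∀ i, P i ∘L P i = P i)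
    (hQsa : ∀ j, IsSelfAdjoint (Q j)) (hQidem : ∀ j, Q j ∘L Q j = Q j)
    (hPsum : ∑ i, P i = 1) (hQsum : ∑ j, Q j = 1)
    (ψ : H) (hψ : ‖ψ‖ = 1) (c : ℝ) (hc : 0 < c)
    (hcle : ∀ k l (x : H), ‖Q l (P k x)‖ ≤ c * ‖x‖) :
    -2 * Real.log c ≤
      (∑ k, Real.negMulLog (‖P k ψ‖^2)) + (∑ l, Real.negMulLog (‖Q l ψ‖^2)) := by
  set p : Fin m → ℝ := fun k => ‖P k ψ‖^2 with hp_def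
  set q : Fin n → ℝ := fun l => ‖Q l ψ‖^2 with hq_def
  set Sp := Finset.univ.filter (fun k => p k ≠ 0) with hSp_def
  set Sq := Finset.univ.filter (fun l => q l ≠ 0) with hSq_def
  have hp_pos : ∀ k ∈ Sp, 0 < p k := fun k hk => by
    rcases lt_or_eq_of_le (sq_nonneg ‖P k ψ‖) with h | h
    · exact h
    · exact absurd h.symm (Finset.mem_filter.mp hk).2
  have hq_pos : ∀ l ∈ Sq, 0 < q l := fun l hl => by
    rcases lt_or_eq_of_le (sq_nonneg ‖Q l ψ‖) with h | h
    · exact h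
    · exact absurd h.symm (Finset.mem_filter.mp hl).2
  have hpsum : ∑ k, p k = 1 := by
    rw [hp_def, sum_sq_proj P hPsa hPidem hPsum ψ, hψ]; norm_num
  have hqsum : ∑ l, q l = 1 := by
    rw [hq_def, sum_sq_proj Q hQsa hQidem hQsum ψ, hψ]; norm_num
  have hpsum' : ∑ k ∈ Sp, p k = 1 := by
    rw [hSp_def, Finset.sum_filter_ne_zero, hpsum]
  have hqsum' : ∑ l ∈ Sq, q l = 1 := by
    rw [hSq_def, Finset.sum_filter_ne_zero, hqsum]
  -- the functions
  set φq : ℝ → ℝ := fun s => ∑ l ∈ Sq, Real.exp (Real.log (q l) * (1-s)⁻¹) with hφq_def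
  set φp : ℝ → ℝ := fun s => ∑ k ∈ Sp, Real.exp (Real.log (p k) * (1+s)⁻¹) with hφp_def
  set F : ℝ → ℝ := fun s =>
    ((1-s)/2) * Real.log (φq s) - ((1+s)/2) * Real.log (φp s) - s * Real.log c with hF_def
  have hφq_eq : ∀ s : ℝ, φq s = ∑ l ∈ Sq, (q l) ^ ((1-s)⁻¹) := by
    intro s
    exact Finset.sum_congr rfl fun l hl => (Real.rpow_def_of_pos (hq_pos l hl) _).symm
  have hφp_eq : ∀ s : ℝ, φp s = ∑ k ∈ Sp, (p k) ^ ((1+s)⁻¹) := by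
    intro s
    exact Finset.sum_congr rfl fun k hk => (Real.rpow_def_of_pos (hp_pos k hk) _).symm
  have hφq0 : φq 0 = 1 := by
    rw [hφq_eq 0]
    have h : ∀ l ∈ Sq, q l ^ ((1-(0:ℝ))⁻¹) = q l := fun l hl => by norm_num
    rw [Finset.sum_congr rfl h, hqsum']
  have hφp0 : φp 0 = 1 := by
    rw [hφp_eq 0]
    have h : ∀ k ∈ Sp, p k ^ ((1+(0:ℝ))⁻¹) = p k := fun k hk => by norm_num
    rw [Finset.sum_congr rfl h, hpsum']
  have hF0 : F 0 = 0 := by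
    rw [hF_def]
    simp [hφq0, hφp0]
  -- F is nonpositive on (0, 1/2]
  have hFneg : ∀ s ∈ Set.Ioc (0:ℝ) (1/2), F s ≤ 0 := by
    intro s hs
    obtain ⟨hs0, hs1⟩ := hs
    have h1s : (0:ℝ) < 1 - s := by
      have : s < 1 := lt_of_le_of_lt hs1 (by norm_num)
      linarith
    have h1s' : (0:ℝ) < 1 + s := by linarith
    have hcore := hadamard_core P Q hPsa hPidem hQsa hQidem hPsum hQsum ψ hψ c hc hcle hs0 hs1
    have hQb_pos : 0 < φq s := by
      rw [hφq_def]
      obtain ⟨l, hl⟩ : Sq.Nonempty := by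
        by_contra hne
        rw [Finset.not_nonempty_iff_eq_empty] at hne
        rw [hne] at hqsum'
        norm_num at hqsum'
      exact Finset.sum_pos' (fun i _ => (Real.exp_pos _).le) ⟨l, hl, Real.exp_pos _⟩
    have hPb_pos : 0 < φp s := by
      rw [hφp_def]
      obtain ⟨k, hk⟩ : Sp.Nonempty := by
        by_contra hne
        rw [Finset.not_nonempty_iff_eq_empty] at hne
        rw [hne] at hpsum'
        norm_num at hpsum'
      exact Finset.sum_pos' (fun i _ => (Real.exp_pos _).le) ⟨k, hk, Real.exp_pos _⟩
    -- rewrite the core inequality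
    have hcore' : (φq s) ^ ((1-s)/2) ≤ c ^ s * (φp s) ^ ((1+s)/2) := by
      rw [hφq_eq s, hφp_eq s]
      simpa only [one_div] using hcore
    have hlog := Real.log_le_log (Real.rpow_pos_of_pos hQb_pos _) hcore'
    rw [Real.log_rpow hQb_pos, Real.log_mul (by positivity) (by positivity),
      Real.log_rpow hPb_pos, Real.log_rpow hc] at hlog
    rw [hF_def]
    simp only
    linarith
  -- derivative of F at 0
  have hφq' : HasDerivAt φq (∑ l ∈ Sq, q l * Real.log (q l)) 0 := by
    rw [hφq_def]
    refine HasDerivAt.fun_sum fun l hl => ?_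
    have h1 : HasDerivAt (fun s : ℝ => 1 - s) (-1) 0 := (hasDerivAt_id (0:ℝ)).const_sub 1
    have h2 : HasDerivAt (fun s : ℝ => (1 - s)⁻¹) 1 0 := by
      have := h1.inv (by norm_num)
      refine this.congr_deriv ?_
      norm_num
    have h3 : HasDerivAt (fun s : ℝ => Real.log (q l) * (1-s)⁻¹) (Real.log (q l)) 0 := by
      have := h2.const_mul (Real.log (q l))
      simpa using this
    have h4 := h3.exp
    have h5 : Real.exp (Real.log (q l) * (1-(0:ℝ))⁻¹) = q l := by
      norm_num
      exact Real.exp_log (hq_pos l hl)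
    rw [h5] at h4
    exact h4
  have hφp' : HasDerivAt φp (-∑ k ∈ Sp, p k * Real.log (p k)) 0 := by
    rw [hφp_def]
    have h0 : (-∑ k ∈ Sp, p k * Real.log (p k)) = ∑ k ∈ Sp, -(p k * Real.log (p k)) := by
      rw [Finset.sum_neg_distrib]
    rw [h0]
    refine HasDerivAt.fun_sum fun k hk => ?_
    have h1 : HasDerivAt (fun s : ℝ => 1 + s) 1 0 := (hasDerivAt_id (0:ℝ)).const_add 1
    have h2 : HasDerivAt (fun s : ℝ => (1 + s)⁻¹) (-1) 0 := by
      have := h1.inv (by norm_num)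
      refine this.congr_deriv ?_
      norm_num
    have h3 : HasDerivAt (fun s : ℝ => Real.log (p k) * (1+s)⁻¹) (-Real.log (p k)) 0 := by
      have := h2.const_mul (Real.log (p k))
      refine this.congr_deriv ?_
      ring
    have h4 := h3.exp
    have h5 : Real.exp (Real.log (p k) * (1+(0:ℝ))⁻¹) = p k := by
      norm_num
      exact Real.exp_log (hp_pos k hk)
    rw [h5] at h4
    refine h4.congr_deriv ?_
    ring
  have hF' : HasDerivAt F
      ((1/2)*(∑ l ∈ Sq, q l * Real.log (q l)) + (1/2)*(∑ k ∈ Sp, p k * Real.log (p k))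
        - Real.log c) 0 := by
    have ha : HasDerivAt (fun s : ℝ => (1-s)/2) (-(1/2) : ℝ) 0 := by
      have := ((hasDerivAt_id (0:ℝ)).const_sub 1).div_const 2
      refine this.congr_deriv ?_
      norm_num
    have hb : HasDerivAt (fun s : ℝ => Real.log (φq s))
        ((∑ l ∈ Sq, q l * Real.log (q l)) / φq 0) 0 := hφq'.log (by rw [hφq0]; norm_num)
    have ha' : HasDerivAt (fun s : ℝ => (1+s)/2) ((1/2) : ℝ) 0 :=
      ((hasDerivAt_id (0:ℝ)).const_add 1).div_const 2
    have hb' : HasDerivAt (fun s : ℝ => Real.log (φp s))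
        ((-∑ k ∈ Sp, p k * Real.log (p k)) / φp 0) 0 := hφp'.log (by rw [hφp0]; norm_num)
    have t1 := ha.mul hb
    have t2 := ha'.mul hb'
    have t3 : HasDerivAt (fun s : ℝ => s * Real.log c) (Real.log c) 0 := by
      have := (hasDerivAt_id (0:ℝ)).mul_const (Real.log c)
      simpa using this
    have := (t1.sub t2).sub t3
    rw [hF_def]
    refine this.congr_deriv ?_
    rw [hφq0, hφp0, Real.log_one]
    ring
  -- slope argument
  have hslope := hasDerivAt_iff_tendsto_slope.mp hF'
  have hmono : 𝓝[>] (0:ℝ) ≤ 𝓝[≠] (0:ℝ) :=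
    nhdsWithin_mono 0 (fun x hx => ne_of_gt hx)
  have htend := hslope.mono_left hmono
  have hev : ∀ᶠ x in 𝓝[>] (0:ℝ), slope F 0 x ≤ 0 := by
    have hmem : Set.Ioc (0:ℝ) (1/2) ∈ 𝓝[>] (0:ℝ) :=
      Ioc_mem_nhdsGT_of_mem ⟨le_refl 0, by norm_num⟩
    filter_upwards [hmem] with x hx
    rw [slope_def_field, hF0]
    have := hFneg x hx
    have hx0 := hx.1
    apply div_nonpos_of_nonpos_of_nonneg
    · simpa using this
    · simpa using hx0.le
  have hD : (1/2)*(∑ l ∈ Sq, q l * Real.log (q l)) + (1/2)*(∑ k ∈ Sp, p k * Real.log (p k))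
      - Real.log c ≤ 0 := le_of_tendsto htend hev
  -- conclude
  have hqext : ∑ l ∈ Sq, q l * Real.log (q l) = ∑ l, q l * Real.log (q l) := by
    refine Finset.sum_subset (Finset.filter_subset _ _) (fun l _ hl => ?_)
    have : q l = 0 := by
      by_contra hne
      exact hl (Finset.mem_filter.mpr ⟨Finset.mem_univ l, hne⟩)
    rw [this]
    simp
  have hpext : ∑ k ∈ Sp, p k * Real.log (p k) = ∑ k, p k * Real.log (p k) := by
    refine Finset.sum_subset (Finset.filter_subset _ _) (fun k _ hk => ?_)
    have : p k = 0 := by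
      by_contra hne
      exact hk (Finset.mem_filter.mpr ⟨Finset.mem_univ k, hne⟩)
    rw [this]
    simp
  have e1 : ∑ k, Real.negMulLog (p k) = -∑ k, p k * Real.log (p k) := by
    simp [Real.negMulLog_eq_neg, Finset.sum_neg_distrib]
  have e2 : ∑ l, Real.negMulLog (q l) = -∑ l, q l * Real.log (q l) := by
    simp [Real.negMulLog_eq_neg, Finset.sum_neg_distrib]
  rw [hqext, hpext] at hD
  have egoal : (∑ k, Real.negMulLog (‖P k ψ‖^2)) + (∑ l, Real.negMulLog (‖Q l ψ‖^2))
      = (∑ k, Real.negMulLog (p k)) + (∑ l, Real.negMulLog (q l)) := rfl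
  rw [egoal, e1, e2]
  linarith


end EntropicUncertaintyHelpers

theorem entropic_uncertainty_mixed_state
    {H : Type*} [NormedAddCommGroup H] [InnerProductSpace ℂ H] [FiniteDimensional ℂ H]
    {m n r : ℕ} (P : Fin m → H →L[ℂ] H) (Q : Fin n → H →L[ℂ] H)
    (hPsa : ∀ i, IsSelfAdjoint (P i)) (hPidem : ∀ i, P i ∘L P i = P i)
    (hQsa : ∀ j, IsSelfAdjoint (Q j)) (hQidem : ∀ j, Q j ∘L Q j = Q j)
    (hPsum : ∑ i, P i = 1) (hQsum : ∑ j, Q j = 1)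
    (π' : Fin r → ℝ) (hπ : ∀ i, 0 < π' i) (hπsum : ∑ i, π' i = 1)
    (ψ : Fin r → H) (hψ : ∀ i, ‖ψ i‖ = 1) :
    (-∑ k, (∑ i, π' i * (inner ℂ (ψ i) (P k (ψ i)) : ℂ).re) *
        Real.logb 2 (∑ i, π' i * (inner ℂ (ψ i) (P k (ψ i)) : ℂ).re)) +
      (-∑ l, (∑ i, π' i * (inner ℂ (ψ i) (Q l (ψ i)) : ℂ).re) *
        Real.logb 2 (∑ i, π' i * (inner ℂ (ψ i) (Q l (ψ i)) : ℂ).re)) ≥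
    -2 * Real.logb 2 (sSup {s : ℝ | ∃ k l, s = ‖P k ∘L Q l‖}) := by
  classical
  set c := sSup {s : ℝ | ∃ k l, s = ‖P k ∘L Q l‖} with hc_def
  have hr : 0 < r := by
    rcases Nat.eq_zero_or_pos r with h | h
    · subst h
      simp at hπsum
    · exact h
  have i0 : Fin r := ⟨0, hr⟩
  have hex : ∃ k l, (P k ∘L Q l) ≠ 0 := by
    by_contra hall
    push_neg at hall
    have h2 : (1 : H →L[ℂ] H) = ∑ k, ∑ l, P k ∘L Q l := by
      calc (1 : H →L[ℂ] H) = 1 * 1 := by rw [one_mul]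
        _ = (∑ k, P k) * (∑ l, Q l) := by rw [hPsum, hQsum]
        _ = ∑ k, ∑ l, P k * Q l := by
            rw [Finset.sum_mul]
            exact Finset.sum_congr rfl fun k _ => Finset.mul_sum _ _ _
        _ = ∑ k, ∑ l, P k ∘L Q l := rfl
    have h3 : (1 : H →L[ℂ] H) = 0 := by
      rw [h2]
      exact Finset.sum_eq_zero fun k _ => Finset.sum_eq_zero fun l _ => hall k l
    have h4 := congrArg (fun T : H →L[ℂ] H => T (ψ i0)) h3
    simp only [ContinuousLinearMap.one_apply, ContinuousLinearMap.zero_apply] at h4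
    have h5 := hψ i0
    rw [h4] at h5
    simp at h5
  obtain ⟨k0, l0, hk0⟩ := hex
  have hset : {s : ℝ | ∃ k l, s = ‖P k ∘L Q l‖} =
      Set.range (fun kl : Fin m × Fin n => ‖P kl.1 ∘L Q kl.2‖) := by
    ext x
    constructor
    · rintro ⟨k, l, rfl⟩
      exact ⟨(k, l), rfl⟩
    · rintro ⟨⟨k, l⟩, rfl⟩
      exact ⟨k, l, rfl⟩
  have hbdd : BddAbove {s : ℝ | ∃ k l, s = ‖P k ∘L Q l‖} := by
    rw [hset]
    exact (Set.finite_range _).bddAbove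
  have hcge : ∀ k l, ‖P k ∘L Q l‖ ≤ c := fun k l => le_csSup hbdd ⟨k, l, rfl⟩
  have hcpos : 0 < c := lt_of_lt_of_le (norm_pos_iff.mpr hk0) (hcge k0 l0)
  have hcle : ∀ k l (x : H), ‖Q l (P k x)‖ ≤ c * ‖x‖ := by
    intro k l x
    have h1 : ‖Q l ∘L P k‖ = ‖P k ∘L Q l‖ := by
      have h2 : ContinuousLinearMap.adjoint (P k ∘L Q l) = Q l ∘L P k := by
        rw [ContinuousLinearMap.adjoint_comp,
          ContinuousLinearMap.isSelfAdjoint_iff'.mp (hPsa k),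
          ContinuousLinearMap.isSelfAdjoint_iff'.mp (hQsa l)]
      rw [← h2]
      exact LinearIsometryEquiv.norm_map ContinuousLinearMap.adjoint _
    calc ‖Q l (P k x)‖ = ‖(Q l ∘L P k) x‖ := rfl
      _ ≤ ‖Q l ∘L P k‖ * ‖x‖ := ContinuousLinearMap.le_opNorm _ _
      _ ≤ c * ‖x‖ := by
          rw [h1]
          exact mul_le_mul_of_nonneg_right (hcge k l) (norm_nonneg x)
  have hpure : ∀ i, -2*Real.log c ≤
      (∑ k, Real.negMulLog (‖P k (ψ i)‖^2)) + (∑ l, Real.negMulLog (‖Q l (ψ i)‖^2)) :=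
    fun i => pure_MU P Q hPsa hPidem hQsa hQidem hPsum hQsum (ψ i) (hψ i) c hcpos hcle
  -- mixed probabilities
  set pm : Fin m → ℝ := fun k => ∑ i, π' i * (inner ℂ (ψ i) (P k (ψ i)) : ℂ).re with hpm_def
  set qm : Fin n → ℝ := fun l => ∑ i, π' i * (inner ℂ (ψ i) (Q l (ψ i)) : ℂ).re with hqm_def
  have hreP : ∀ i k, ((inner ℂ (ψ i) (P k (ψ i)) : ℂ)).re = ‖P k (ψ i)‖^2 := by
    intro i k
    rw [proj_inner_self (hPsa k) (hPidem k)]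
    exact Complex.ofReal_re _
  have hreQ : ∀ i l, ((inner ℂ (ψ i) (Q l (ψ i)) : ℂ)).re = ‖Q l (ψ i)‖^2 := by
    intro i l
    rw [proj_inner_self (hQsa l) (hQidem l)]
    exact Complex.ofReal_re _
  -- Jensen
  have hJP : ∀ k, ∑ i, π' i * Real.negMulLog (‖P k (ψ i)‖^2) ≤ Real.negMulLog (pm k) := by
    intro k
    have h := Real.concaveOn_negMulLog.le_map_sum (t := Finset.univ) (w := π')
      (p := fun i => ‖P k (ψ i)‖^2) (fun i _ => (hπ i).le) hπsum
      (fun i _ => Set.mem_Ici.mpr (sq_nonneg _))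
    have hpk : pm k = ∑ i, π' i * ‖P k (ψ i)‖^2 := by
      rw [hpm_def]
      exact Finset.sum_congr rfl fun i _ => by rw [hreP i k]
    rw [hpk]
    simpa [smul_eq_mul] using h
  have hJQ : ∀ l, ∑ i, π' i * Real.negMulLog (‖Q l (ψ i)‖^2) ≤ Real.negMulLog (qm l) := by
    intro l
    have h := Real.concaveOn_negMulLog.le_map_sum (t := Finset.univ) (w := π')
      (p := fun i => ‖Q l (ψ i)‖^2) (fun i _ => (hπ i).le) hπsum
      (fun i _ => Set.mem_Ici.mpr (sq_nonneg _))
    have hql : qm l = ∑ i, π' i * ‖Q l (ψ i)‖^2 := by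
      rw [hqm_def]
      exact Finset.sum_congr rfl fun i _ => by rw [hreQ i l]
    rw [hql]
    simpa [smul_eq_mul] using h
  -- entropy bound in nats
  have hE : -2 * Real.log c ≤
      (∑ k, Real.negMulLog (pm k)) + (∑ l, Real.negMulLog (qm l)) := by
    have h1 : ∑ k, ∑ i, π' i * Real.negMulLog (‖P k (ψ i)‖^2) ≤ ∑ k, Real.negMulLog (pm k) :=
      Finset.sum_le_sum fun k _ => hJP k
    have h2 : ∑ l, ∑ i, π' i * Real.negMulLog (‖Q l (ψ i)‖^2) ≤ ∑ l, Real.negMulLog (qm l) :=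
      Finset.sum_le_sum fun l _ => hJQ l
    have h3 : ∑ i, π' i * (-2 * Real.log c) ≤
        ∑ i, π' i * ((∑ k, Real.negMulLog (‖P k (ψ i)‖^2)) +
          (∑ l, Real.negMulLog (‖Q l (ψ i)‖^2))) :=
      Finset.sum_le_sum fun i _ => mul_le_mul_of_nonneg_left (hpure i) (hπ i).le
    have h4 : ∑ i, π' i * (-2 * Real.log c) = -2 * Real.log c := by
      rw [← Finset.sum_mul, hπsum, one_mul]
    have h5 : ∑ i, π' i * ((∑ k, Real.negMulLog (‖P k (ψ i)‖^2)) +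
          (∑ l, Real.negMulLog (‖Q l (ψ i)‖^2)))
        = (∑ k, ∑ i, π' i * Real.negMulLog (‖P k (ψ i)‖^2))
          + (∑ l, ∑ i, π' i * Real.negMulLog (‖Q l (ψ i)‖^2)) := by
      rw [Finset.sum_comm (s := Finset.univ) (t := Finset.univ)
        (f := fun k i => π' i * Real.negMulLog (‖P k (ψ i)‖^2)),
        Finset.sum_comm (s := Finset.univ) (t := Finset.univ)
        (f := fun l i => π' i * Real.negMulLog (‖Q l (ψ i)‖^2))]
      rw [← Finset.sum_add_distrib]
      exact Finset.sum_congr rfl fun i _ => by rw [mul_add, Finset.mul_sum, Finset.mul_sum]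
    rw [h4, h5] at h3
    linarith
  -- convert to logb
  have hlog2 : 0 < Real.log 2 := Real.log_pos one_lt_two
  have g1 : (-∑ k, pm k * Real.logb 2 (pm k)) = (∑ k, Real.negMulLog (pm k)) / Real.log 2 := by
    rw [Finset.sum_div, ← Finset.sum_neg_distrib]
    refine Finset.sum_congr rfl fun k _ => ?_
    rw [Real.negMulLog, Real.logb]
    field_simp
  have g2 : (-∑ l, qm l * Real.logb 2 (qm l)) = (∑ l, Real.negMulLog (qm l)) / Real.log 2 := by
    rw [Finset.sum_div, ← Finset.sum_neg_distrib]
    refine Finset.sum_congr rfl fun l _ => ?_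
    rw [Real.negMulLog, Real.logb]
    field_simp
  have g3 : -2 * Real.logb 2 c = (-2 * Real.log c) / Real.log 2 := by
    rw [Real.logb]
    ring
  rw [ge_iff_le, g1, g2, g3, ← add_div]
  exact (div_le_div_iff_of_pos_right hlog2).mpr hE
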